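/- For the rewriting of a universal Guess&Check subprogram: if M_G is an answer set of the guess part G_{P} and the check part C_{P} ∪ fix_{G_P}(M_G) is incoherent (some constraint of P is violated), then the transformed program τ(u,P) ∪ fix_{G_P}(M_G) has a unique answer set M_u in which the fresh atom u is true; conversely, if C_{P} ∪ fix_{G_P}(M_G) has (unique) answer set M_C, then τ(u,P) ∪ fix_{G_P}(M_G) has the unique answer set M_C in which u is false. -/

import Mathlib

inductive Lit (α : Type) where
  | pos (a : α) : Lit α
  | neg (a : α) : Lit α

def Lit.compl {α : Type} : Lit α → Lit α
  | .pos a => .neg a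
  | .neg a => .pos a

/-- A rule with an optional atom head (`none` for constraints) and a body of literals. -/
structure Rule (α : Type) where
  head : Option α
  body : Set (Lit α)

def posBody {α : Type} (r : Rule α) : Set α := {a | Lit.pos a ∈ r.body}
def negBody {α : Type} (r : Rule α) : Set α := {a | Lit.neg a ∈ r.body}

/-- The atoms (Herbrand base) of a program. -/
def atoms {α : Type} (P : Set (Rule α)) : Set α :=
  {a | ∃ r ∈ P, r.head = some a ∨ Lit.pos a ∈ r.body ∨ Lit.neg a ∈ r.body}

/-- `M'` is a model of the Gelfond–Lifschitz reduct `P^M`. -/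
def modelsReduct {α : Type} (P : Set (Rule α)) (M M' : Set α) : Prop :=
  ∀ r ∈ P, (∀ a ∈ negBody r, a ∉ M) → posBody r ⊆ M' →
    ∃ h, r.head = some h ∧ h ∈ M'

/-- `M` is an answer set of `P`: a subset of the atoms of `P` that is a
minimal model of the reduct `P^M`. -/
def isAnswerSet {α : Type} (P : Set (Rule α)) (M : Set α) : Prop :=
  M ⊆ atoms P ∧ modelsReduct P M M ∧ ∀ M' ⊂ M, ¬ modelsReduct P M M'

/-- `G` is a choice program: it consists exactly of the pairs of rules
`a ← ∼na(a)` and `na(a) ← ∼a` for the atoms `a` of some set `A`,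
with fresh auxiliary atoms `na(a)`. -/
def isChoiceProgram {α : Type} (G : Set (Rule α)) : Prop :=
  ∃ (A : Set α) (na : α → α),
    (∀ a ∈ A, na a ∉ A) ∧ Set.InjOn na A ∧
    G = {r | ∃ a ∈ A, r = ⟨some a, {Lit.neg (na a)}⟩ ∨ r = ⟨some (na a), {Lit.neg a}⟩}

/-- `P` is stratified: there is a level mapping such that positive dependencies
do not increase the level and negative dependencies strictly decrease it. -/
def stratified {α : Type} (P : Set (Rule α)) : Prop :=
  ∃ s : α → ℕ, ∀ r ∈ P, ∀ h, r.head = some h →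
    (∀ a ∈ posBody r, s a ≤ s h) ∧ (∀ a ∈ negBody r, s a < s h)

/-- The head atoms of a program. -/
def heads {α : Type} (P : Set (Rule α)) : Set α :=
  {h | ∃ r ∈ P, r.head = some h}

/-- `fix_Q(M)`: facts for the atoms of `Q` true in `M` and constraints
forbidding the atoms of `Q` false in `M`. -/
def fixProg {α : Type} (Q : Set (Rule α)) (M : Set α) : Set (Rule α) :=
  {r | ∃ a ∈ M ∩ atoms Q, r = ⟨some a, ∅⟩} ∪
  {r | ∃ a ∈ atoms Q \ M, r = ⟨none, {Lit.pos a}⟩}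

/-- `τ(u,P)`: each constraint `← B` of the check part is replaced by the rule
`u ← B`; non-constraint rules are kept unchanged. -/
def tauProg {α : Type} (u : α) (C : Set (Rule α)) : Set (Rule α) :=
  {r' | ∃ r ∈ C, (r.head ≠ none ∧ r' = r) ∨ (r.head = none ∧ r' = ⟨some u, r.body⟩)}

namespace TauAux

variable {α : Type}

/-- The one-step consequence operator of the reduct of `P` w.r.t. `M`. -/
def Top (P : Set (Rule α)) (M X : Set α) : Set α :=
  {h | ∃ r ∈ P, r.head = some h ∧ (∀ a ∈ negBody r, a ∉ M) ∧ posBody r ⊆ X}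

/-- The least fixed point of `Top P M`. -/
def lfp (P : Set (Rule α)) (M : Set α) : Set α :=
  ⋂₀ {X | Top P M X ⊆ X}

theorem Top_mono {P : Set (Rule α)} {M X Y : Set α} (h : X ⊆ Y) :
    Top P M X ⊆ Top P M Y := by
  rintro x ⟨r, hr, hh, hneg, hpos⟩
  exact ⟨r, hr, hh, hneg, hpos.trans h⟩

theorem Top_mono_prog {P Q : Set (Rule α)} {M X : Set α} (h : P ⊆ Q) :
    Top P M X ⊆ Top Q M X := by
  rintro x ⟨r, hr, hh, hneg, hpos⟩
  exact ⟨r, h hr, hh, hneg, hpos⟩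

theorem lfp_le {P : Set (Rule α)} {M X : Set α} (h : Top P M X ⊆ X) : lfp P M ⊆ X :=
  Set.sInter_subset_of_mem h

theorem Top_lfp_le {P : Set (Rule α)} {M : Set α} : Top P M (lfp P M) ⊆ lfp P M := by
  intro x hx
  apply Set.mem_sInter.2
  intro X hX
  exact hX (Top_mono (lfp_le hX) hx)

theorem lfp_subset_heads {P : Set (Rule α)} {M : Set α} : lfp P M ⊆ heads P :=
  lfp_le (by rintro x ⟨r, hr, hh, -, -⟩; exact ⟨r, hr, hh⟩)

theorem lfp_mono_prog {P Q : Set (Rule α)} {M : Set α} (h : P ⊆ Q) :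
    lfp P M ⊆ lfp Q M :=
  lfp_le ((Top_mono_prog h).trans Top_lfp_le)

theorem Top_congr {P : Set (Rule α)} {M M' X : Set α}
    (h : ∀ r ∈ P, ∀ a ∈ negBody r, (a ∈ M ↔ a ∈ M')) :
    Top P M X = Top P M' X := by
  ext x
  constructor <;> rintro ⟨r, hr, hh, hneg, hpos⟩
  · exact ⟨r, hr, hh, fun a ha hM' => hneg a ha ((h r hr a ha).2 hM'), hpos⟩
  · exact ⟨r, hr, hh, fun a ha hM => hneg a ha ((h r hr a ha).1 hM), hpos⟩

theorem lfp_congr {P : Set (Rule α)} {M M' : Set α}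
    (h : ∀ r ∈ P, ∀ a ∈ negBody r, (a ∈ M ↔ a ∈ M')) :
    lfp P M = lfp P M' := by
  apply Set.Subset.antisymm
  · exact lfp_le (by rw [Top_congr h]; exact Top_lfp_le)
  · exact lfp_le (by rw [← Top_congr h]; exact Top_lfp_le)

/-! ### Stratification -/

/-- The stratification condition with a fixed level mapping. -/
def stratWith (P : Set (Rule α)) (s : α → ℕ) : Prop :=
  ∀ r ∈ P, ∀ h, r.head = some h →
    (∀ a ∈ posBody r, s a ≤ s h) ∧ (∀ a ∈ negBody r, s a < s h)

/-- Rules of `P` whose head has level `< n`. -/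
def Pn (P : Set (Rule α)) (s : α → ℕ) (n : ℕ) : Set (Rule α) :=
  {r | r ∈ P ∧ ∃ h, r.head = some h ∧ s h < n}

/-- Atoms of level `< n`. -/
def Lv (s : α → ℕ) (n : ℕ) : Set α := {a | s a < n}

theorem Pn_subset {P : Set (Rule α)} {s : α → ℕ} {n : ℕ} : Pn P s n ⊆ P :=
  fun _ hr => hr.1

theorem Pn_mono {P : Set (Rule α)} {s : α → ℕ} {n m : ℕ} (h : n ≤ m) :
    Pn P s n ⊆ Pn P s m := by
  rintro r ⟨h1, h2, h3, h4⟩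
  exact ⟨h1, h2, h3, lt_of_lt_of_le h4 h⟩

theorem heads_Pn {P : Set (Rule α)} {s : α → ℕ} {n : ℕ} : heads (Pn P s n) ⊆ Lv s n := by
  rintro h ⟨r, ⟨hrP, h', hh', hl⟩, hh⟩
  rw [hh] at hh'
  injection hh' with e
  subst e
  exact hl

theorem heads_mono {P Q : Set (Rule α)} (h : P ⊆ Q) : heads P ⊆ heads Q := by
  rintro x ⟨r, hr, hh⟩
  exact ⟨r, h hr, hh⟩

theorem Lv_zero {s : α → ℕ} : Lv s 0 = ∅ := by
  ext a
  simp [Lv]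

theorem lfp_Pn_zero {P : Set (Rule α)} {s : α → ℕ} (M : Set α) :
    lfp (Pn P s 0) M = ∅ := by
  have h : lfp (Pn P s 0) M ⊆ Lv s 0 := lfp_subset_heads.trans heads_Pn
  rw [Lv_zero] at h
  exact Set.subset_empty_iff.mp h

/-- Restriction of the least fixed point to a downward-closed level set. -/
theorem restrict {P : Set (Rule α)} {s : α → ℕ} (hs : stratWith P s) {n : ℕ}
    {Q : Set (Rule α)} (hQ1 : Pn P s n ⊆ Q) (hQ2 : Q ⊆ P) (M : Set α) :
    lfp Q M ∩ Lv s n = lfp (Pn P s n) M := by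
  apply Set.Subset.antisymm
  · have hpre : Top Q M (lfp (Pn P s n) M ∪ (lfp Q M \ Lv s n)) ⊆
        lfp (Pn P s n) M ∪ (lfp Q M \ Lv s n) := by
      rintro x ⟨r, hr, hh, hneg, hpos⟩
      by_cases hl : s x < n
      · have hrn : r ∈ Pn P s n := ⟨hQ2 hr, x, hh, hl⟩
        have hpos' : posBody r ⊆ lfp (Pn P s n) M := by
          intro a ha
          have hla : s a < n := lt_of_le_of_lt ((hs r (hQ2 hr) x hh).1 a ha) hl
          rcases hpos ha with h | h
          · exact h
          · exact absurd hla h.2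
        exact Or.inl (Top_lfp_le ⟨r, hrn, hh, hneg, hpos'⟩)
      · have hsub : lfp (Pn P s n) M ∪ (lfp Q M \ Lv s n) ⊆ lfp Q M :=
          Set.union_subset (lfp_mono_prog hQ1) (fun a ha => ha.1)
        exact Or.inr ⟨Top_lfp_le ⟨r, hr, hh, hneg, hpos.trans hsub⟩, hl⟩
    have h1 := lfp_le hpre
    rintro a ⟨haQ, haLv⟩
    rcases h1 haQ with h | h
    · exact h
    · exact absurd haLv h.2
  · intro a ha
    exact ⟨lfp_mono_prog hQ1 ha, heads_Pn (lfp_subset_heads ha)⟩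

/-- The fixed point of the rules of level `< n` only depends on the truth of
atoms of level `< n - 1`. -/
theorem Pn_dep {P : Set (Rule α)} {s : α → ℕ} (hs : stratWith P s) {n : ℕ} {M M' : Set α}
    (h : ∀ a : α, s a + 1 < n → (a ∈ M ↔ a ∈ M')) :
    lfp (Pn P s n) M = lfp (Pn P s n) M' := by
  apply lfp_congr
  rintro r ⟨hrP, h', hh', hl⟩ a ha
  have hlt := (hs r hrP h' hh').2 a ha
  exact h a (by omega)

/-- Perfect-model iteration along strata. -/
def seqN (P : Set (Rule α)) (s : α → ℕ) : ℕ → Set α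
  | 0 => ∅
  | n + 1 => lfp (Pn P s (n + 1)) (seqN P s n)

theorem seqN_subset_Lv {P : Set (Rule α)} {s : α → ℕ} :
    ∀ n, seqN P s n ⊆ Lv s n
  | 0 => by intro a ha; exact absurd ha (Set.notMem_empty a)
  | n + 1 => lfp_subset_heads.trans heads_Pn

theorem seqN_coherent {P : Set (Rule α)} {s : α → ℕ} (hs : stratWith P s) :
    ∀ m n, n ≤ m → seqN P s m ∩ Lv s n = seqN P s n := by
  intro m
  induction m with
  | zero =>
    intro n hn
    have : n = 0 := Nat.le_zero.mp hn
    subst this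
    show (∅ : Set α) ∩ Lv s 0 = ∅
    simp
  | succ m ih =>
    intro n hn
    rcases Nat.lt_or_ge n (m + 1) with h | h
    · have hnm : n ≤ m := Nat.lt_succ_iff.mp h
      have hr : seqN P s (m + 1) ∩ Lv s n = lfp (Pn P s n) (seqN P s m) := by
        show lfp (Pn P s (m + 1)) (seqN P s m) ∩ Lv s n = _
        exact restrict hs (Pn_mono (by omega)) Pn_subset _
      rw [hr]
      cases n with
      | zero => exact lfp_Pn_zero _
      | succ k =>
        have hk : k ≤ m := by omega
        show _ = lfp (Pn P s (k + 1)) (seqN P s k)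
        apply Pn_dep hs
        intro a ha
        have haLv : a ∈ Lv s k := by show s a < k; omega
        constructor
        · intro haM
          have h2 : a ∈ seqN P s m ∩ Lv s k := ⟨haM, haLv⟩
          rw [ih k hk] at h2
          exact h2
        · intro haM
          have h2 : a ∈ seqN P s m ∩ Lv s k := (ih k hk).symm ▸ haM
          exact h2.1
    · have : n = m + 1 := by omega
      subst this
      exact Set.inter_eq_left.mpr (seqN_subset_Lv _)

/-- The perfect model of a stratified program. -/
def pm (P : Set (Rule α)) (s : α → ℕ) : Set α := ⋃ n, seqN P s n

theorem union_Lv {s : α → ℕ} (S : Set α) : S = ⋃ n, S ∩ Lv s n := by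
  ext a
  simp only [Set.mem_iUnion, Set.mem_inter_iff]
  constructor
  · intro h
    exact ⟨s a + 1, h, by show s a < s a + 1; omega⟩
  · rintro ⟨n, h, -⟩
    exact h

theorem pm_inter {P : Set (Rule α)} {s : α → ℕ} (hs : stratWith P s) (n : ℕ) :
    pm P s ∩ Lv s n = seqN P s n := by
  ext a
  simp only [pm, Set.mem_inter_iff, Set.mem_iUnion]
  constructor
  · rintro ⟨⟨m, ham⟩, haLv⟩
    rcases le_total n m with h | h
    · have h2 : a ∈ seqN P s m ∩ Lv s n := ⟨ham, haLv⟩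
      rw [seqN_coherent hs m n h] at h2
      exact h2
    · have h2 : seqN P s n ∩ Lv s m = seqN P s m := seqN_coherent hs n m h
      rw [← h2] at ham
      exact ham.1
  · intro ha
    exact ⟨⟨n, ha⟩, seqN_subset_Lv n ha⟩

theorem lfp_Pn_pm {P : Set (Rule α)} {s : α → ℕ} (hs : stratWith P s) (n : ℕ) :
    lfp (Pn P s n) (pm P s) = seqN P s n := by
  cases n with
  | zero => exact lfp_Pn_zero _
  | succ k =>
    show _ = lfp (Pn P s (k + 1)) (seqN P s k)
    apply Pn_dep hs
    intro a ha
    have haLv : a ∈ Lv s k := by show s a < k; omega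
    constructor
    · intro h
      have h2 : a ∈ pm P s ∩ Lv s k := ⟨h, haLv⟩
      rw [pm_inter hs k] at h2
      exact h2
    · intro h
      exact Set.mem_iUnion.2 ⟨k, h⟩

theorem pm_fix {P : Set (Rule α)} {s : α → ℕ} (hs : stratWith P s) :
    lfp P (pm P s) = pm P s := by
  have h1 : lfp P (pm P s) = ⋃ n, lfp P (pm P s) ∩ Lv s n := union_Lv _
  have h2 : ∀ n, lfp P (pm P s) ∩ Lv s n = seqN P s n := by
    intro n
    rw [restrict hs Pn_subset (subset_refl P) _]
    exact lfp_Pn_pm hs n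
  rw [h1]
  exact Set.iUnion_congr h2

theorem fix_unique {P : Set (Rule α)} {s : α → ℕ} (hs : stratWith P s) {M : Set α}
    (hM : lfp P M = M) : M = pm P s := by
  have key : ∀ n, M ∩ Lv s n = seqN P s n := by
    intro n
    induction n with
    | zero =>
      rw [Lv_zero]
      show M ∩ ∅ = ∅
      simp
    | succ k ih =>
      conv_lhs => rw [← hM]
      rw [restrict hs Pn_subset (subset_refl P) M]
      show _ = lfp (Pn P s (k + 1)) (seqN P s k)
      apply Pn_dep hs
      intro a ha
      have haLv : a ∈ Lv s k := by show s a < k; omega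
      constructor
      · intro h
        have h2 : a ∈ M ∩ Lv s k := ⟨h, haLv⟩
        rw [ih] at h2
        exact h2
      · intro h
        have h2 : a ∈ M ∩ Lv s k := ih.symm ▸ h
        exact h2.1
  calc M = ⋃ n, M ∩ Lv s n := union_Lv M
    _ = ⋃ n, seqN P s n := Set.iUnion_congr key

theorem pm_subset_heads {P : Set (Rule α)} {s : α → ℕ} : pm P s ⊆ heads P := by
  rintro a ha
  obtain ⟨n, ha⟩ := Set.mem_iUnion.mp ha
  cases n with
  | zero => exact absurd ha (Set.notMem_empty a)
  | succ k => exact heads_mono Pn_subset (lfp_subset_heads ha)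

/-! ### Characterization of answer sets -/

theorem answer_char (P : Set (Rule α)) (M : Set α) :
    isAnswerSet P M ↔ M ⊆ atoms P ∧ lfp P M = M ∧
      (∀ r ∈ P, r.head = none → (∀ a ∈ negBody r, a ∉ M) → ¬ (posBody r ⊆ M)) := by
  constructor
  · rintro ⟨hsub, hmod, hmin⟩
    refine ⟨hsub, ?_, ?_⟩
    · have hTopM : Top P M M ⊆ M := by
        rintro x ⟨r, hr, hh, hneg, hpos⟩
        obtain ⟨h', hh', hM⟩ := hmod r hr hneg hpos
        rw [hh] at hh'
        injection hh' with e
        subst e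
        exact hM
      have hle : lfp P M ⊆ M := lfp_le hTopM
      by_contra hne
      have hss : lfp P M ⊂ M := hle.ssubset_of_ne hne
      apply hmin _ hss
      intro r hr hneg hpos
      obtain ⟨h', hh', _⟩ := hmod r hr hneg (hpos.trans hle)
      exact ⟨h', hh', Top_lfp_le ⟨r, hr, hh', hneg, hpos⟩⟩
    · intro r hr hhead hneg hpos
      obtain ⟨h', hh', -⟩ := hmod r hr hneg hpos
      rw [hhead] at hh'
      cases hh'
  · rintro ⟨hsub, hfix, hsat⟩
    refine ⟨hsub, ?_, ?_⟩
    · intro r hr hneg hpos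
      cases hh : r.head with
      | none => exact absurd hpos (hsat r hr hh hneg)
      | some h =>
        refine ⟨h, rfl, ?_⟩
        rw [← hfix] at hpos ⊢
        exact Top_lfp_le ⟨r, hr, hh, hneg, hpos⟩
    · rintro M' hss hmod'
      have hsub' : lfp P M ⊆ M' := by
        apply lfp_le
        rintro x ⟨r, hr, hh, hneg, hpos⟩
        obtain ⟨h', hh', hM'⟩ := hmod' r hr hneg hpos
        rw [hh] at hh'
        injection hh' with e
        subst e
        exact hM'
      rw [hfix] at hsub'
      exact hss.2 hsub'

/-- The trigger condition: some constraint of `C` fires. -/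
def trig (C : Set (Rule α)) (M X : Set α) : Prop :=
  ∃ r ∈ C, r.head = none ∧ (∀ b ∈ negBody r, b ∉ M) ∧ posBody r ⊆ X

theorem posBody_empty (h : Option α) : posBody (⟨h, ∅⟩ : Rule α) = ∅ := by
  ext a
  simp [posBody]

theorem negBody_empty (h : Option α) : negBody (⟨h, ∅⟩ : Rule α) = ∅ := by
  ext a
  simp [negBody]

theorem posBody_single (h : Option α) (a : α) :
    posBody (⟨h, {Lit.pos a}⟩ : Rule α) = {a} := by
  ext b
  simp [posBody, Lit.pos.injEq]

theorem negBody_single_pos (h : Option α) (a : α) :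
    negBody (⟨h, {Lit.pos a}⟩ : Rule α) = ∅ := by
  ext b
  simp [negBody]

end TauAux
open TauAux in
/-- Rewriting of a universal Guess&Check subprogram. -/
theorem tau_rewriting {α : Type} (G C : Set (Rule α)) (u : α)
    (hG : isChoiceProgram G) (hC : stratified C)
    (hdisj : heads C ∩ atoms G = ∅)
    (hu : u ∉ atoms (G ∪ C))
    (MG : Set α) (hMG : isAnswerSet G MG) :
    ((¬ ∃ W, isAnswerSet (C ∪ fixProg G MG) W) →
        ∃ Mu, isAnswerSet (tauProg u C ∪ fixProg G MG) Mu ∧ u ∈ Mu ∧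
          ∀ M', isAnswerSet (tauProg u C ∪ fixProg G MG) M' → M' = Mu) ∧
    (∀ MC, isAnswerSet (C ∪ fixProg G MG) MC →
        isAnswerSet (tauProg u C ∪ fixProg G MG) MC ∧ u ∉ MC ∧
          ∀ M', isAnswerSet (tauProg u C ∪ fixProg G MG) M' → M' = MC) := by
  classical
  obtain ⟨s, hs⟩ := hC
  set F := fixProg G MG with hFdef
  -- basic freshness facts about u
  have huG : u ∉ atoms G := by
    rintro ⟨r, hr, h2⟩
    exact hu ⟨r, Set.mem_union_left C hr, h2⟩
  have huC : u ∉ atoms C := by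
    rintro ⟨r, hr, h2⟩
    exact hu ⟨r, Set.mem_union_right G hr, h2⟩
  have hMGsub : MG ⊆ atoms G := hMG.1
  -- stratification of C ∪ F
  have hsQ : stratWith (C ∪ F) s := by
    rintro r (hr | hr) h hh
    · exact hs r hr h hh
    · rcases hr with ⟨a, ha, rfl⟩ | ⟨a, ha, rfl⟩
      · constructor
        · intro b hb
          rw [posBody_empty] at hb
          exact absurd hb (Set.notMem_empty b)
        · intro b hb
          rw [negBody_empty] at hb
          exact absurd hb (Set.notMem_empty b)
      · cases hh
  -- u does not occur in bodies/heads of C ∪ F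
  have hposuC : ∀ r ∈ C, u ∉ posBody r := fun r hr hp =>
    huC ⟨r, hr, Or.inr (Or.inl hp)⟩
  have hneguC : ∀ r ∈ C, u ∉ negBody r := fun r hr hp =>
    huC ⟨r, hr, Or.inr (Or.inr hp)⟩
  have hposuQ : ∀ r ∈ C ∪ F, u ∉ posBody r := by
    rintro r (hr | hr) hp
    · exact hposuC r hr hp
    · rcases hr with ⟨a, ha, rfl⟩ | ⟨a, ha, rfl⟩
      · rw [posBody_empty] at hp
        exact absurd hp (Set.notMem_empty u)
      · rw [posBody_single] at hp
        exact huG (by rw [show u = a from hp]; exact ha.1)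
  have hneguQ : ∀ r ∈ C ∪ F, u ∉ negBody r := by
    rintro r (hr | hr) hp
    · exact hneguC r hr hp
    · rcases hr with ⟨a, ha, rfl⟩ | ⟨a, ha, rfl⟩
      · rw [negBody_empty] at hp
        exact absurd hp (Set.notMem_empty u)
      · rw [negBody_single_pos] at hp
        exact absurd hp (Set.notMem_empty u)
  have hheaduQ : u ∉ heads (C ∪ F) := by
    rintro ⟨r, hr | hr, hh⟩
    · exact huC ⟨r, hr, Or.inl hh⟩
    · rcases hr with ⟨a, ha, rfl⟩ | ⟨a, ha, rfl⟩
      · injection hh with e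
        exact huG (e ▸ ha.2)
      · cases hh
  -- the perfect model N of C ∪ F
  set N := pm (C ∪ F) s with hNdef
  have hNfix : lfp (C ∪ F) N = N := pm_fix hsQ
  have hNuniq : ∀ M, lfp (C ∪ F) M = M → M = N := fun M hM => fix_unique hsQ hM
  have hNheads : N ⊆ heads (C ∪ F) := pm_subset_heads
  have huN : u ∉ N := fun h => hheaduQ (hNheads h)
  have hNC : ∀ a ∈ N, (∃ r ∈ C, r.head = some a) ∨ a ∈ MG ∩ atoms G := by
    intro a ha
    obtain ⟨r, hr | hr, hh⟩ := hNheads ha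
    · exact Or.inl ⟨r, hr, hh⟩
    · rcases hr with ⟨b, hb, rfl⟩ | ⟨b, hb, rfl⟩
      · injection hh with e
        exact Or.inr (e ▸ hb)
      · cases hh
  have hNnotG : ∀ a ∈ N, a ∈ atoms G → a ∈ MG := by
    intro a ha haG
    rcases hNC a ha with ⟨r, hr, hh⟩ | hb
    · have : a ∈ heads C ∩ atoms G := ⟨⟨r, hr, hh⟩, haG⟩
      rw [hdisj] at this
      exact absurd this (Set.notMem_empty a)
    · exact hb.1
  -- constraints of F are never violated by subsets of N ∪ {u}
  have hSatF : ∀ M : Set α, (∀ a ∈ M, a ∈ N ∨ a = u) →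
      ∀ r ∈ F, r.head = none → (∀ b ∈ negBody r, b ∉ M) → ¬ posBody r ⊆ M := by
    intro M hMN r hr hhead hneg hpos
    rcases hr with ⟨a, ha, rfl⟩ | ⟨a, ha, rfl⟩
    · cases hhead
    · have haM : a ∈ M := hpos (by rw [posBody_single]; exact Set.mem_singleton a)
      rcases hMN a haM with haN | rfl
      · exact ha.2 (hNnotG a haN ha.1)
      · exact huG ha.1
  -- relating the operators of the two programs
  have hTop : ∀ M X : Set α, Top (tauProg u C ∪ F) M X =
      Top (C ∪ F) M X ∪ {a | a = u ∧ trig C M X} := by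
    intro M X
    ext x
    constructor
    · rintro ⟨r', hr', hh, hneg, hpos⟩
      rcases hr' with hr' | hr'
      · obtain ⟨r, hr, (⟨hne, rfl⟩ | ⟨hnone, rfl⟩)⟩ := hr'
        · exact Or.inl ⟨r', Set.mem_union_left F hr, hh, hneg, hpos⟩
        · injection hh with e
          exact Or.inr ⟨e.symm, r, hr, hnone, hneg, hpos⟩
      · exact Or.inl ⟨r', Set.mem_union_right C hr', hh, hneg, hpos⟩
    · rintro (⟨r, hr | hr, hh, hneg, hpos⟩ | ⟨he, r, hr, hnone, hneg, hpos⟩)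
      · refine ⟨r, Set.mem_union_left F ⟨r, hr, Or.inl ⟨?_, rfl⟩⟩, hh, hneg, hpos⟩
        rw [hh]
        exact fun h => by cases h
      · exact ⟨r, Set.mem_union_right _ hr, hh, hneg, hpos⟩
      · exact ⟨⟨some u, r.body⟩, Set.mem_union_left F ⟨r, hr, Or.inr ⟨hnone, rfl⟩⟩,
          by rw [he], hneg, hpos⟩
  have hlfp2 : ∀ M : Set α, lfp (tauProg u C ∪ F) M =
      lfp (C ∪ F) M ∪ {a | a = u ∧ trig C M (lfp (C ∪ F) M)} := by
    intro M
    have hmono : lfp (C ∪ F) M ⊆ lfp (tauProg u C ∪ F) M := by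
      apply lfp_le
      intro y hy
      apply Top_lfp_le
      rw [hTop]
      exact Or.inl hy
    apply Set.Subset.antisymm
    · apply lfp_le
      rw [hTop]
      rintro x (hx | ⟨rfl, r, hr, hnone, hneg, hpos⟩)
      · obtain ⟨r, hr, hh, hneg, hpos⟩ := hx
        have hpos' : posBody r ⊆ lfp (C ∪ F) M := by
          intro a ha
          rcases hpos ha with h | ⟨rfl, -⟩
          · exact h
          · exact absurd ha (hposuQ r hr)
        exact Or.inl (Top_lfp_le ⟨r, hr, hh, hneg, hpos'⟩)
      · refine Or.inr ⟨rfl, r, hr, hnone, hneg, ?_⟩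
        intro a ha
        rcases hpos ha with h | ⟨rfl, -⟩
        · exact h
        · exact absurd ha (hposuC r hr)
    · rintro x (hx | ⟨rfl, r, hr, hnone, hneg, hpos⟩)
      · exact hmono hx
      · apply Top_lfp_le
        rw [hTop]
        exact Or.inr ⟨rfl, r, hr, hnone, hneg, hpos.trans hmono⟩
  -- congruence w.r.t. the fresh atom u
  have hcongr : ∀ M M' : Set α, (∀ a, a ≠ u → (a ∈ M ↔ a ∈ M')) →
      lfp (C ∪ F) M = lfp (C ∪ F) M' := by
    intro M M' h
    apply lfp_congr
    intro r hr a ha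
    exact h a (fun e => hneguQ r hr (e ▸ ha))
  have htrigc : ∀ M M' : Set α, (∀ b, b ≠ u → (b ∈ M ↔ b ∈ M')) → ∀ X : Set α,
      (trig C M X ↔ trig C M' X) := by
    intro M M' hMM X
    constructor <;> rintro ⟨r, hr, h1, h2, h3⟩ <;> refine ⟨r, hr, h1, ?_, h3⟩
    · intro b hb hbM'
      exact h2 b hb ((hMM b fun e => hneguC r hr (e ▸ hb)).2 hbM')
    · intro b hb hbM
      exact h2 b hb ((hMM b fun e => hneguC r hr (e ▸ hb)).1 hbM)
  -- characterization of answer sets of tauProg u C ∪ F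
  have h2fwd : ∀ M, isAnswerSet (tauProg u C ∪ F) M →
      M = N ∪ {a | a = u ∧ trig C N N} := by
    intro M hM
    rw [answer_char] at hM
    obtain ⟨hsub, hfix, hsat⟩ := hM
    rw [hlfp2 M] at hfix
    have huK : u ∉ lfp (C ∪ F) M := fun h => hheaduQ (lfp_subset_heads h)
    have hMdiff : M \ {u} = lfp (C ∪ F) M := by
      ext a
      constructor
      · rintro ⟨haM, hane⟩
        simp only [Set.mem_singleton_iff] at hane
        rcases (Set.ext_iff.mp hfix a).mpr haM with h | ⟨he, -⟩
        · exact h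
        · exact absurd he hane
      · intro h
        refine ⟨(Set.ext_iff.mp hfix a).mp (Or.inl h), ?_⟩
        intro e
        exact huK ((Set.mem_singleton_iff.mp e) ▸ h)
    have hmemb : ∀ b : α, b ≠ u → (b ∈ M ↔ b ∈ M \ {u}) := by
      intro b hb
      simp [Set.mem_diff, Set.mem_singleton_iff, hb]
    have hKM : lfp (C ∪ F) M = lfp (C ∪ F) (M \ {u}) := hcongr M (M \ {u}) hmemb
    have hMN : M \ {u} = N := hNuniq _ (hKM.symm.trans hMdiff.symm)
    have hKN : lfp (C ∪ F) M = N := hMdiff.symm.trans hMN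
    have hmembN : ∀ b : α, b ≠ u → (b ∈ M ↔ b ∈ N) := by
      intro b hb
      rw [← hMN]
      exact hmemb b hb
    have hfix' : N ∪ {a | a = u ∧ trig C M N} = M := by
      rw [← hKN]
      exact hfix
    rw [← hfix']
    ext a
    simp only [Set.mem_union, Set.mem_setOf_eq]
    exact or_congr Iff.rfl (and_congr_right fun _ => htrigc M N hmembN N)
  have h2bwd : isAnswerSet (tauProg u C ∪ F) (N ∪ {a | a = u ∧ trig C N N}) := by
    have hmembMu : ∀ b : α, b ≠ u →
        (b ∈ N ∪ {a | a = u ∧ trig C N N} ↔ b ∈ N) := by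
      intro b hb
      constructor
      · rintro (h | ⟨he, -⟩)
        · exact h
        · exact absurd he hb
      · exact Or.inl
    have hMueq : lfp (C ∪ F) (N ∪ {a | a = u ∧ trig C N N}) = N :=
      (hcongr _ _ hmembMu).trans hNfix
    rw [answer_char]
    refine ⟨?_, ?_, ?_⟩
    · rintro a (ha | ⟨he, r, hr, hnone, -, -⟩)
      · rcases hNC a ha with ⟨r, hr, hh⟩ | hb
        · refine ⟨r, Set.mem_union_left F ⟨r, hr, Or.inl ⟨?_, rfl⟩⟩, Or.inl hh⟩
          rw [hh]
          exact fun h => by cases h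
        · exact ⟨⟨some a, ∅⟩, Set.mem_union_right _ (Or.inl ⟨a, hb, rfl⟩), Or.inl rfl⟩
      · exact ⟨⟨some u, r.body⟩, Set.mem_union_left F ⟨r, hr, Or.inr ⟨hnone, rfl⟩⟩,
          Or.inl (by rw [he])⟩
    · rw [hlfp2, hMueq]
      ext a
      simp only [Set.mem_union, Set.mem_setOf_eq]
      exact or_congr Iff.rfl (and_congr_right fun _ => htrigc _ N hmembMu N)
    · intro r hr hhead hneg hpos
      rcases hr with hr | hr
      · obtain ⟨r₀, hr₀, (⟨hne, rfl⟩ | ⟨h0, rfl⟩)⟩ := hr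
        · exact hne hhead
        · cases hhead
      · refine hSatF _ ?_ r hr hhead hneg hpos
        rintro a (ha | ⟨he, -⟩)
        · exact Or.inl ha
        · exact Or.inr he
  -- characterization of answer sets of C ∪ F
  have h1fwd : ∀ M, isAnswerSet (C ∪ F) M → M = N ∧ ¬ trig C N N := by
    intro M hM
    rw [answer_char] at hM
    obtain ⟨hsub, hfix, hsat⟩ := hM
    have hMN : M = N := hNuniq M hfix
    subst hMN
    refine ⟨rfl, ?_⟩
    rintro ⟨r, hr, h1, h2, h3⟩
    exact hsat r (Set.mem_union_left F hr) h1 h2 h3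
  have h1bwd : ¬ trig C N N → isAnswerSet (C ∪ F) N := by
    intro hnT
    rw [answer_char]
    refine ⟨?_, hNfix, ?_⟩
    · intro a ha
      rcases hNC a ha with ⟨r, hr, hh⟩ | hb
      · exact ⟨r, Set.mem_union_left F hr, Or.inl hh⟩
      · exact ⟨⟨some a, ∅⟩, Set.mem_union_right C (Or.inl ⟨a, hb, rfl⟩), Or.inl rfl⟩
    · intro r hr hhead hneg hpos
      rcases hr with hr | hr
      · exact hnT ⟨r, hr, hhead, hneg, hpos⟩
      · exact hSatF N (fun a ha => Or.inl ha) r hr hhead hneg hpos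
  -- conclusion
  constructor
  · intro hno
    have hT : trig C N N := by
      by_contra hnT
      exact hno ⟨N, h1bwd hnT⟩
    exact ⟨N ∪ {a | a = u ∧ trig C N N}, h2bwd, Or.inr ⟨rfl, hT⟩,
      fun M' hM' => h2fwd M' hM'⟩
  · intro MC hMC
    obtain ⟨hMCN, hnT⟩ := h1fwd MC hMC
    subst hMCN
    have hMu : N ∪ {a | a = u ∧ trig C N N} = N := by
      have hset : {a : α | a = u ∧ trig C N N} = ∅ := by
        ext a
        simp [hnT]
      rw [hset, Set.union_empty]
    exact ⟨hMu ▸ h2bwd, huN, fun M' hM' => (h2fwd M' hM').trans hMu⟩
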